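/- The function T : ℕ → ℕ assigning to each x the least k such that Code.evaln k (Code.ofNatCode (K x)) 0 = some x (the runtime of the shortest program for x) is not computable. -/

import Mathlib

open scoped Classical
open Nat.Partrec Nat.Partrec.Code

theorem K_exists (x : ℕ) : ∃ e : ℕ, (Code.ofNatCode e).eval 0 = Part.some x :=
  ⟨Code.encodeCode (Code.const x), by
    rw [← Code.encodeCode_eq, ← Code.ofNatCode_eq, Denumerable.ofNat_encode]
    exact Code.eval_const x 0⟩

/-- Kolmogorov complexity: the least index `e` such that program `e` on input `0` outputs `x`. -/
noncomputable def K (x : ℕ) : ℕ := Nat.find (K_exists x)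

theorem T_exists (x : ℕ) : ∃ k : ℕ, Code.evaln k (Code.ofNatCode (K x)) 0 = some x := by
  have h : x ∈ (Code.ofNatCode (K x)).eval 0 := by
    have := Nat.find_spec (K_exists x)
    rw [show K x = Nat.find (K_exists x) from rfl, this]
    exact Part.mem_some x
  obtain ⟨k, hk⟩ := Code.evaln_complete.mp h
  exact ⟨k, hk⟩

/-- The running time of the shortest program for `x`. -/
noncomputable def T (x : ℕ) : ℕ := Nat.find (T_exists x)

/-- Computability of `Nat.find` for computable decidable predicates. -/
theorem computable_nat_find {α : Type*} [Primcodable α] {p : α → ℕ → Prop}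
    [∀ a n, Decidable (p a n)] (hp : Computable₂ fun a n => decide (p a n))
    (h : ∀ a, ∃ n, p a n) : Computable fun a => Nat.find (h a) := by
  have hrf : Partrec fun a => Nat.rfind fun n => (Part.some (decide (p a n)) : Part Bool) :=
    Partrec.rfind (hp.partrec₂.of_eq fun a => rfl)
  refine hrf.of_eq_tot fun a => ?_
  apply Nat.mem_rfind.2
  constructor
  · simpa using Nat.find_spec (h a)
  · intro m hm
    simpa using Nat.find_min (h a) hm

theorem K_eq_find_of_T
    (h : ∀ x : ℕ, ∃ e : ℕ, Code.evaln (T x) (Code.ofNatCode e) 0 = some x) :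
    ∀ x, K x = Nat.find (h x) := by
  intro x
  apply le_antisymm
  · exact Nat.find_min' (K_exists x)
      (Part.eq_some_iff.2 (Code.evaln_sound (Nat.find_spec (h x))))
  · exact Nat.find_min' (h x) (Nat.find_spec (T_exists x))

theorem K_injective : Function.Injective K := by
  intro x y hxy
  have hx := Nat.find_spec (K_exists x)
  have hy := Nat.find_spec (K_exists y)
  rw [show K x = Nat.find (K_exists x) from rfl] at hxy
  rw [show K y = Nat.find (K_exists y) from rfl] at hxy
  rw [hxy, hy] at hx
  exact (Part.some_inj.mp hx).symm

theorem g_exists (m : ℕ) : ∃ y : ℕ, m ≤ K y := by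
  by_contra hc
  push_neg at hc
  have hsub : (Finset.range (m + 1)).image K ⊆ Finset.range m := by
    intro z hz
    simp only [Finset.mem_image, Finset.mem_range] at hz ⊢
    obtain ⟨y, _, rfl⟩ := hz
    exact hc y
  have := Finset.card_le_card hsub
  rw [Finset.card_image_of_injective _ K_injective, Finset.card_range, Finset.card_range] at this
  omega

theorem T_spec (x : ℕ) : Code.evaln (T x) (Code.ofNatCode (K x)) 0 = some x :=
  Nat.find_spec (T_exists x)

theorem K_le {x e : ℕ} (h : (Code.ofNatCode e).eval 0 = Part.some x) : K x ≤ e :=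
  Nat.find_min' (K_exists x) h

attribute [local irreducible] K T in
theorem T_not_computable : ¬ Computable T := by
  intro hT
  -- If T is computable then K is computable
  have hex : ∀ x : ℕ, ∃ e : ℕ, Code.evaln (T x) (Code.ofNatCode e) 0 = some x :=
    fun x => ⟨K x, T_spec x⟩
  have hK : Computable K := by
    have h1 : Computable fun p : ℕ × ℕ =>
        Code.evaln (T p.1) (Code.ofNatCode p.2) 0 := by
      have hc : Computable fun p : ℕ × ℕ => ((T p.1, (Denumerable.ofNat Code p.2)), 0) :=
        ((hT.comp Computable.fst).pair
          ((Computable.ofNat Code).comp Computable.snd)).pair (Computable.const 0)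
      exact (Code.primrec_evaln.to_comp.comp hc).of_eq fun p => by
        rw [Code.ofNatCode_eq]
    have hp : Computable₂ fun (x e : ℕ) =>
        decide (Code.evaln (T x) (Code.ofNatCode e) 0 = some x) :=
      Primrec.eq.decide.to_comp.comp h1 (Computable.option_some.comp Computable.fst)
    exact (computable_nat_find hp hex).of_eq fun x => (K_eq_find_of_T hex x).symm
  -- g m = least y with m ≤ K y is computable
  have hKsnd : Computable fun p : ℕ × ℕ => K p.2 := hK.comp Computable.snd
  have hple : Computable₂ fun (m y : ℕ) => decide (m ≤ K y) :=
    Computable₂.comp (f := fun a b : ℕ => decide (a ≤ b))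
      (h := fun p : ℕ × ℕ => K p.2) Primrec.nat_le.decide.to_comp Computable.fst hKsnd
  have hg : Computable fun m => Nat.find (g_exists m) :=
    computable_nat_find (h := g_exists) hple
  set g : ℕ → ℕ := fun m => Nat.find (g_exists m) with hgdef
  have hgspec : ∀ m, m ≤ K (g m) := fun m => Nat.find_spec (g_exists m)
  -- Kleene fixed point / Berry paradox
  have henc : Computable fun p : Code × ℕ =>
      Code.encodeCode (p.1.comp (Code.const p.2)) + 1 := by
    have h0 : Primrec fun p : Code × ℕ => p.1.comp (Code.const p.2) :=
      Code.primrec₂_comp.comp Primrec.fst (Code.primrec_const.comp Primrec.snd)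
    exact ((Primrec.succ.comp (Primrec.encode_iff.2 h0)).to_comp).of_eq fun p => by
      rw [Code.encodeCode_eq]
  have hF : Partrec₂ fun (c : Code) (n : ℕ) =>
      (Part.some (g (Code.encodeCode (c.comp (Code.const n)) + 1)) : Part ℕ) :=
    Computable₂.partrec₂ (hg.comp henc)
  obtain ⟨c, hc⟩ := Code.fixed_point₂ hF
  set e := Code.encodeCode (c.comp (Code.const 0)) with he
  set x := g (e + 1) with hx
  have heval : (Code.ofNatCode e).eval 0 = Part.some x := by
    rw [← Code.ofNatCode_eq, he, ← Code.encodeCode_eq, Denumerable.ofNat_encode]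
    show ((c.comp (Code.const 0)).eval 0) = Part.some x
    have hcomp : (c.comp (Code.const 0)).eval 0 = ((Code.const 0).eval 0).bind c.eval := rfl
    rw [hcomp, Code.eval_const]
    exact (Part.bind_some 0 c.eval).trans (congrFun hc 0)
  have h1 : K x ≤ e := K_le heval
  have h2 : e + 1 ≤ K x := hgspec (e + 1)
  omega
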